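/- Let φ : ℝ≥0^n → ℝ≥0^n be a standard interference function (monotone and scalable with strictly positive values) with fixed point ρ*. For any starting point ρ^(0) ≥ ρ* with ρ^(0) = α ρ* for some α > 1, the iterates ρ^(k+1) = φ(ρ^(k)) form a nonincreasing sequence bounded below by ρ*, hence converge to ρ*. -/

import Mathlib

theorem stmt10 {n : ℕ} (φ : (Fin n → NNReal) → (Fin n → NNReal))
    (hmono : Monotone φ)
    (hpos : ∀ ρ i, 0 < φ ρ i)
    (hscale : ∀ α : NNReal, 1 < α → ∀ ρ i, φ (α • ρ) i < α * φ ρ i)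
    (ρs : Fin n → NNReal) (hfix : φ ρs = ρs)
    (α : NNReal) (hα : 1 < α) :
    Antitone (fun k : ℕ => φ^[k] (α • ρs)) ∧ (∀ k : ℕ, ρs ≤ φ^[k] (α • ρs)) ∧
    Filter.Tendsto (fun k : ℕ => φ^[k] (α • ρs)) Filter.atTop (nhds ρs) := by
  set ρ : ℕ → Fin n → NNReal := fun k => φ^[k] (α • ρs) with hρ
  have hρsucc : ∀ k, ρ (k + 1) = φ (ρ k) := fun k => Function.iterate_succ_apply' φ k _
  have hpos' : ∀ i, 0 < ρs i := fun i => hfix ▸ hpos ρs i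
  have hlow : ∀ k, ρs ≤ ρ k := by
    intro k
    induction k with
    | zero =>
      intro i
      simp only [hρ, Function.iterate_zero, id_eq, Pi.smul_apply, smul_eq_mul]
      exact le_mul_of_one_le_left zero_le hα.le
    | succ k ih =>
      rw [hρsucc]
      calc ρs = φ ρs := hfix.symm
        _ ≤ φ (ρ k) := hmono ih
  have hstep : ∀ k, ρ (k + 1) ≤ ρ k := by
    intro k
    induction k with
    | zero =>
      rw [hρsucc]
      intro i
      have h := hscale α hα ρs i
      rw [hfix] at h
      simpa only [hρ, Function.iterate_zero, id_eq, Pi.smul_apply, smul_eq_mul] using h.le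
    | succ k ih =>
      calc ρ (k + 1 + 1) = φ (ρ (k + 1)) := hρsucc _
        _ ≤ φ (ρ k) := hmono ih
        _ = ρ (k + 1) := (hρsucc _).symm
  have hanti : Antitone ρ := antitone_nat_of_succ_le hstep
  set L : Fin n → NNReal := fun i => ⨅ k, ρ k i with hLdef
  have hL_tendsto : ∀ i, Filter.Tendsto (fun k => ρ k i) Filter.atTop (nhds (L i)) :=
    fun i => tendsto_atTop_ciInf (fun a b hab => hanti hab i) (OrderBot.bddBelow _)
  have hρsL : ρs ≤ L := fun i => le_ciInf fun k => hlow k i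
  have hLle : ∀ k i, L i ≤ ρ k i := fun k i => ciInf_le (OrderBot.bddBelow _) k
  have hφL_le : φ L ≤ L := by
    intro i
    refine le_ciInf fun k => ?_
    calc φ L i ≤ φ (ρ k) i := hmono (fun j => hLle k j) i
      _ = ρ (k + 1) i := by rw [hρsucc]
      _ ≤ ρ k i := hstep k i
  have hLpos : ∀ i, 0 < L i := fun i => lt_of_lt_of_le (hpos' i) (hρsL i)
  have hL_le_φL : L ≤ φ L := by
    intro i
    by_contra h
    push_neg at h
    have hφLpos : φ L i ≠ 0 := (hpos L i).ne'
    set α' : NNReal := L i / φ L i with hα'def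
    have hα' : 1 < α' := by
      rw [hα'def, lt_div_iff₀ (hpos L i), one_mul]
      exact h
    have hev : ∀ᶠ k in Filter.atTop, ∀ j, ρ k j < α' * L j := by
      rw [Filter.eventually_all]
      intro j
      exact (hL_tendsto j).eventually_lt_const (lt_mul_of_one_lt_left (hLpos j) hα')
    obtain ⟨N, hN⟩ := hev.exists
    have hNle : ρ N ≤ α' • L := fun j => by
      simpa only [Pi.smul_apply, smul_eq_mul] using (hN j).le
    have : L i < L i := by
      calc L i ≤ ρ (N + 1) i := hLle (N + 1) i
        _ = φ (ρ N) i := by rw [hρsucc]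
        _ ≤ φ (α' • L) i := hmono hNle i
        _ < α' * φ L i := hscale α' hα' L i
        _ = L i := div_mul_cancel₀ _ hφLpos
    exact lt_irrefl _ this
  have hLfix : φ L = L := le_antisymm hφL_le hL_le_φL
  have hLρs : L = ρs := by
    refine le_antisymm ?_ hρsL
    intro i
    by_contra h
    push_neg at h
    have hne : ∀ j, ρs j ≠ 0 := fun j => (hpos' j).ne'
    set β : NNReal := Finset.univ.sup' ⟨i, Finset.mem_univ i⟩ (fun j => L j / ρs j) with hβdef
    obtain ⟨j0, _, hj0⟩ := Finset.exists_mem_eq_sup' ⟨i, Finset.mem_univ i⟩ (fun j => L j / ρs j)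
    have hβ1 : 1 < β := by
      have : L i / ρs i ≤ β := Finset.le_sup' (fun j => L j / ρs j) (Finset.mem_univ i)
      refine lt_of_lt_of_le ?_ this
      rw [lt_div_iff₀ (hpos' i), one_mul]
      exact h
    have hLβ : L ≤ β • ρs := fun j => by
      have : L j / ρs j ≤ β := Finset.le_sup' (fun j => L j / ρs j) (Finset.mem_univ j)
      rw [div_le_iff₀ (hpos' j)] at this
      simpa only [Pi.smul_apply, smul_eq_mul, mul_comm] using this
    have : L j0 < L j0 := by
      calc L j0 = φ L j0 := (congrFun hLfix j0).symm
        _ ≤ φ (β • ρs) j0 := hmono hLβ j0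
        _ < β * φ ρs j0 := hscale β hβ1 ρs j0
        _ = β * ρs j0 := by rw [hfix]
        _ = L j0 / ρs j0 * ρs j0 := by rw [hβdef, hj0]
        _ = L j0 := div_mul_cancel₀ _ (hne j0)
    exact lt_irrefl _ this
  refine ⟨hanti, hlow, ?_⟩
  rw [tendsto_pi_nhds]
  intro i
  have := hL_tendsto i
  rwa [show L i = ρs i from congrFun hLρs i] at this
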